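/- (Positive expected log-growth of the LR e-process under the alternative.) Let q, δ, p ∈ ℝ with 0 < q − δ, q < 1, δ > 0, and 0 ≤ p ≤ q − δ. Then p · log((q − δ)/q) + (1 − p) · log((1 − q + δ)/(1 − q)) > 0. -/
import Mathlib


/-- Positive expected log-growth of the LR e-process under the alternative: when
the sampled subgroup's score `p` is separated below the threshold `q` by `δ`, the
expected log-increment of the likelihood-ratio e-process is strictly positive. -/
theorem lr_positive_log_growth
    (q δ p : ℝ) (hqδ : 0 < q - δ) (hq : q < 1) (hδ : 0 < δ)
    (hp0 : 0 ≤ p) (hp : p ≤ q - δ) :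
    p * Real.log ((q - δ) / q) + (1 - p) * Real.log ((1 - q + δ) / (1 - q)) > 0 := by
  set a := q - δ with ha
  have ha0 : 0 < a := hqδ
  have hq0 : 0 < q := by linarith
  have h1q : (0:ℝ) < 1 - q := by linarith
  have h1a : (0:ℝ) < 1 - a := by simp only [ha]; linarith
  have haq : a < q := by simp only [ha]; linarith
  have hrw : (1:ℝ) - q + δ = 1 - a := by simp only [ha]; ring
  rw [hrw]
  -- KL positivity at p = a
  have h1 : Real.log (q / a) < q / a - 1 :=
    Real.log_lt_sub_one_of_pos (by positivity) (by
      intro h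
      have : q = a := by field_simp at h; linarith
      linarith)
  have h2 : Real.log ((1 - q) / (1 - a)) ≤ (1 - q) / (1 - a) - 1 :=
    Real.log_le_sub_one_of_pos (by positivity)
  have e1 : Real.log (a / q) = - Real.log (q / a) := by
    rw [← Real.log_inv, inv_div]
  have e2 : Real.log ((1 - a) / (1 - q)) = - Real.log ((1 - q) / (1 - a)) := by
    rw [← Real.log_inv, inv_div]
  have eq1 : a * (q / a) = q := by field_simp
  have eq2 : (1 - a) * ((1 - q) / (1 - a)) = 1 - q := by field_simp
  have hKL : 0 < a * Real.log (a / q) + (1 - a) * Real.log ((1 - a) / (1 - q)) := by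
    rw [e1, e2]
    nlinarith [mul_lt_mul_of_pos_left h1 ha0, mul_le_mul_of_nonneg_left h2 h1a.le]
  have hlogneg : Real.log (a / q) < 0 :=
    Real.log_neg (by positivity) ((div_lt_one hq0).2 haq)
  have hlogpos : 0 < Real.log ((1 - a) / (1 - q)) :=
    Real.log_pos ((one_lt_div h1q).2 (by linarith))
  have hap : 0 ≤ a - p := by linarith
  nlinarith [mul_nonneg hap hlogpos.le, mul_nonpos_of_nonneg_of_nonpos hap hlogneg.le]
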